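/- Let (Ω, ℱ, P) be a probability space, Y₀, Y₁ : Ω → ℝ square-integrable with Y₀·Y₁ integrable, and let 𝒵 ⊆ ℱ be a sub-σ-algebra. Let m_a be a version of E[Y_a | 𝒵] for a ∈ {0,1}, and assume the idiosyncratic components are conditionally uncorrelated given 𝒵, i.e. E[Y₀·Y₁ | 𝒵] = m₀·m₁ almost surely. If Var[m₁ − m₀] ≤ Var[m_a] for at least one a ∈ {0,1} (treatment-effect heterogeneity across 𝒵-strata is no more variable than the heterogeneity in expected outcomes), then Cov[Y₀, Y₁] ≥ 0. -/

import Mathlib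

open MeasureTheory ProbabilityTheory

lemma aux_condexp_memℒp_two {Ω : Type*} (𝒵 : MeasurableSpace Ω) [mΩ : MeasurableSpace Ω]
    (P : Measure Ω) [IsProbabilityMeasure P] (hZ : 𝒵 ≤ mΩ) {f : Ω → ℝ}
    (hf : MemLp f 2 P) : MemLp (P[f|𝒵]) 2 P := by
  set F := hf.toLp f with hF
  have hg : (P[f|𝒵]) =ᵐ[P] (condExpL2 ℝ ℝ hZ F : Ω → ℝ) := by
    refine (ae_eq_condExp_of_forall_setIntegral_eq hZ (hf.integrable one_le_two)
      (fun s hs hμs => integrableOn_Lp_of_measure_ne_top _ one_le_two hμs.ne) ?_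
      (aestronglyMeasurable_condExpL2 hZ F)).symm
    intro s hs hμs
    rw [integral_condExpL2_eq hZ F hs hμs.ne]
    exact setIntegral_congr_ae (hZ s hs) ((hf.coeFn_toLp).mono fun x hx _ => hx)
  exact (Lp.memLp _).ae_eq hg.symm

lemma aux_integrable_mul_of_memℒp_two {Ω : Type*} [mΩ : MeasurableSpace Ω] {P : Measure Ω}
    {f g : Ω → ℝ} (hf : MemLp f 2 P) (hg : MemLp g 2 P) :
    Integrable (fun ω => f ω * g ω) P := by
  have hb : Integrable (fun ω => (f ω ^ 2 + g ω ^ 2) / 2) P :=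
    (hf.integrable_sq.add hg.integrable_sq).div_const 2
  refine hb.mono' (hf.aestronglyMeasurable.mul hg.aestronglyMeasurable) ?_
  filter_upwards with ω
  rw [Real.norm_eq_abs, abs_mul]
  nlinarith [sq_nonneg (|f ω| - |g ω|), sq_abs (f ω), sq_abs (g ω)]

theorem nonnegative_cross_counterfactual_covariance
    {Ω : Type*} [mΩ : MeasurableSpace Ω] (P : Measure Ω) [IsProbabilityMeasure P]
    (Y0 Y1 : Ω → ℝ) (hY0 : MemLp Y0 2 P) (hY1 : MemLp Y1 2 P)
    (hY01 : Integrable (fun ω => Y0 ω * Y1 ω) P)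
    (𝒵 : MeasurableSpace Ω) (hZ : 𝒵 ≤ mΩ)
    (m0 m1 : Ω → ℝ)
    (hm0 : m0 =ᵐ[P] P[Y0 | 𝒵]) (hm1 : m1 =ᵐ[P] P[Y1 | 𝒵])
    (huncorr : P[fun ω => Y0 ω * Y1 ω | 𝒵] =ᵐ[P] fun ω => m0 ω * m1 ω)
    (hvar : variance (fun ω => m1 ω - m0 ω) P ≤ variance m0 P ∨
            variance (fun ω => m1 ω - m0 ω) P ≤ variance m1 P) :
    0 ≤ ∫ ω, (Y0 ω - ∫ x, Y0 x ∂P) * (Y1 ω - ∫ x, Y1 x ∂P) ∂P := by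
  have hm0L2 : MemLp m0 2 P := (aux_condexp_memℒp_two 𝒵 (mΩ := mΩ) P hZ hY0).ae_eq hm0.symm
  have hm1L2 : MemLp m1 2 P := (aux_condexp_memℒp_two 𝒵 (mΩ := mΩ) P hZ hY1).ae_eq hm1.symm
  have hm0i : Integrable m0 P := hm0L2.integrable one_le_two
  have hm1i : Integrable m1 P := hm1L2.integrable one_le_two
  have hY0i : Integrable Y0 P := hY0.integrable one_le_two
  have hY1i : Integrable Y1 P := hY1.integrable one_le_two
  have hmm : Integrable (fun ω => m0 ω * m1 ω) P :=
    aux_integrable_mul_of_memℒp_two (mΩ := mΩ) hm0L2 hm1L2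
  have hm0sq : Integrable (fun ω => m0 ω ^ 2) P := hm0L2.integrable_sq
  have hm1sq : Integrable (fun ω => m1 ω ^ 2) P := hm1L2.integrable_sq
  have hEm0 : ∫ ω, m0 ω ∂P = ∫ ω, Y0 ω ∂P := by
    rw [integral_congr_ae hm0, integral_condExp hZ]
  have hEm1 : ∫ ω, m1 ω ∂P = ∫ ω, Y1 ω ∂P := by
    rw [integral_congr_ae hm1, integral_condExp hZ]
  have hEmm : ∫ ω, m0 ω * m1 ω ∂P = ∫ ω, Y0 ω * Y1 ω ∂P := by
    rw [← integral_congr_ae huncorr, integral_condExp hZ]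
  set a := ∫ x, Y0 x ∂P with ha
  set b := ∫ x, Y1 x ∂P with hb
  have i1 : Integrable (fun ω => Y0 ω * Y1 ω - a * Y1 ω) P := hY01.sub (hY1i.const_mul a)
  have i2 : Integrable (fun ω => Y0 ω * Y1 ω - a * Y1 ω - b * Y0 ω) P := i1.sub (hY0i.const_mul b)
  have hexp : ∫ ω, (Y0 ω - a) * (Y1 ω - b) ∂P
      = (∫ ω, Y0 ω * Y1 ω ∂P) - a * b := by
    have heq : (fun ω => (Y0 ω - a) * (Y1 ω - b))
        = fun ω => Y0 ω * Y1 ω - a * Y1 ω - b * Y0 ω + a * b := by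
      funext ω; ring
    rw [heq, integral_add i2 (integrable_const (a * b)),
      integral_sub i1 (hY0i.const_mul b),
      integral_sub hY01 (hY1i.const_mul a), integral_const_mul, integral_const_mul,
      integral_const]
    simp [← ha, ← hb]
    ring
  have j1 : Integrable (fun ω => m1 ω ^ 2 - 2 * (m0 ω * m1 ω)) P := hm1sq.sub (hmm.const_mul 2)
  have hsq : ∫ ω, (m1 ω - m0 ω) ^ 2 ∂P
      = ∫ ω, m1 ω ^ 2 ∂P - 2 * ∫ ω, m0 ω * m1 ω ∂P + ∫ ω, m0 ω ^ 2 ∂P := by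
    have heq : (fun ω => (m1 ω - m0 ω) ^ 2)
        = fun ω => m1 ω ^ 2 - 2 * (m0 ω * m1 ω) + m0 ω ^ 2 := by
      funext ω; ring
    rw [heq, integral_add j1 hm0sq,
      integral_sub hm1sq (hmm.const_mul 2), integral_const_mul]
  have hEd : ∫ ω, (m1 ω - m0 ω) ∂P = b - a := by
    rw [integral_sub hm1i hm0i, hEm1, hEm0]
  have v0 := variance_eq_sub hm0L2
  have v1 := variance_eq_sub hm1L2
  have vd : variance (fun ω => m1 ω - m0 ω) P
      = ∫ ω, (m1 ω - m0 ω) ^ 2 ∂P - (∫ ω, (m1 ω - m0 ω) ∂P) ^ 2 :=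
    variance_eq_sub (hm1L2.sub hm0L2)
  simp only [Pi.pow_apply] at v0 v1
  have hv0 : 0 ≤ variance m0 P := variance_nonneg _ _
  have hv1 : 0 ≤ variance m1 P := variance_nonneg _ _
  rw [hexp, ← hEmm]
  rw [hsq, hEd] at vd
  rw [hEm0] at v0
  rw [hEm1] at v1
  rcases hvar with h | h
  · nlinarith [vd, v0, v1, hv0, hv1]
  · nlinarith [vd, v0, v1, hv0, hv1]
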